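/- Let M be a right R-module. End(M) is Dedekind-finite if and only if for any isomorphic direct summands D₁, D₂ of M with Hom(D₁, M/D₁) = 0, one also has Hom(D₂, M/D₂) = 0. -/

import Mathlib

private theorem aux_le {R : Type*} [Ring R] {M : Type*} [AddCommGroup M] [Module R M]
    (hDF : ∀ a b : Module.End R M, a * b = 1 → b * a = 1)
    (D₁ D₂ D₁' D₂' : Submodule R M) (hc₁ : IsCompl D₁ D₁') (hc₂ : IsCompl D₂ D₂')
    (f : D₁ ≃ₗ[R] D₂) (hf : ∀ d : D₁, ((f d : M)) ∈ D₁) : D₁ ≤ D₂ := by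
  set π₁ := D₁.linearProjOfIsCompl D₁' hc₁ with hπ₁
  set π₁' := D₁'.linearProjOfIsCompl D₁ hc₁.symm with hπ₁'
  set π₂ := D₂.linearProjOfIsCompl D₂' hc₂ with hπ₂
  set b : Module.End R M :=
    D₂.subtype ∘ₗ (f : D₁ →ₗ[R] D₂) ∘ₗ π₁ + D₁'.subtype ∘ₗ π₁' with hb
  set a : Module.End R M :=
    D₁.subtype ∘ₗ (f.symm : D₂ →ₗ[R] D₁) ∘ₗ π₂ ∘ₗ D₁.subtype ∘ₗ π₁ + D₁'.subtype ∘ₗ π₁'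
    with ha
  have hab : a * b = 1 := by
    apply LinearMap.ext
    intro x
    have hbx : b x = (f (π₁ x) : M) + (π₁' x : M) := by simp [hb]
    set u : D₂ := f (π₁ x) with hu
    have hu1 : (u : M) ∈ D₁ := hf _
    have e1 : π₁ (u : M) = ⟨u, hu1⟩ := Submodule.linearProjOfIsCompl_apply_left hc₁ ⟨u, hu1⟩
    have e2 : π₁ ((π₁' x : M)) = 0 := Submodule.linearProjOfIsCompl_apply_right hc₁ _
    have e3 : π₁' ((u : M)) = 0 :=
      Submodule.projectionOnto_apply_of_mem_right hc₁.symm hu1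
    have e4 : π₁' ((π₁' x : M)) = π₁' x :=
      Submodule.linearProjOfIsCompl_apply_left hc₁.symm _
    have e5 : π₂ ((u : M)) = u := Submodule.linearProjOfIsCompl_apply_left hc₂ u
    have habx : a (b x) = x := by
      rw [hbx]
      simp only [ha, LinearMap.add_apply, LinearMap.comp_apply, Submodule.coe_subtype,
        map_add, e1, e2, e3, e4, e5]
      simp only [hu, Submodule.coe_zero, map_zero, add_zero, zero_add,
        LinearEquiv.coe_coe, LinearEquiv.symm_apply_apply]
      exact Submodule.projection_add_projection_eq_self hc₁ x
    simpa [Module.End.mul_apply] using habx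
  have hba := hDF a b hab
  intro x hx
  have hax : a x = ((f.symm (π₂ x) : D₁) : M) := by
    have e1 : π₁ x = ⟨x, hx⟩ := Submodule.linearProjOfIsCompl_apply_left hc₁ ⟨x, hx⟩
    have e3 : π₁' x = 0 := Submodule.projectionOnto_apply_of_mem_right hc₁.symm hx
    simp only [ha, LinearMap.add_apply, LinearMap.comp_apply, Submodule.coe_subtype, e1, e3,
      Submodule.coe_zero, add_zero]
    rfl
  set w : D₁ := f.symm (π₂ x) with hw
  have hbax : b (a x) = ((f w : D₂) : M) := by
    rw [hax]
    have e1 : π₁ ((w : M)) = w := Submodule.linearProjOfIsCompl_apply_left hc₁ w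
    have e3 : π₁' ((w : M)) = 0 := Submodule.linearProjOfIsCompl_apply_right hc₁.symm w
    simp [hb, e1, e3]
  have : x = ((f w : D₂) : M) := by
    rw [← hbax]
    have := LinearMap.congr_fun hba x
    simpa [Module.End.mul_apply] using this.symm
  rw [this]
  exact (f w).2

/-- `End(M)` is Dedekind-finite iff for all isomorphic direct summands `D₁, D₂` of
`M` with `Hom(D₁, M/D₁) = 0`, also `Hom(D₂, M/D₂) = 0`. -/
theorem end_dedekindFinite_iff_summand_condition
    (R : Type*) [Ring R] (M : Type*) [AddCommGroup M] [Module R M] :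
    (∀ a b : Module.End R M, a * b = 1 → b * a = 1) ↔
      (∀ D₁ D₂ : Submodule R M,
        (∃ D₁' : Submodule R M, IsCompl D₁ D₁') →
        (∃ D₂' : Submodule R M, IsCompl D₂ D₂') →
        Nonempty (D₁ ≃ₗ[R] D₂) →
        (∀ g : D₁ →ₗ[R] (M ⧸ D₁), g = 0) →
        (∀ g : D₂ →ₗ[R] (M ⧸ D₂), g = 0)) := by
  constructor
  · rintro hDF D₁ D₂ ⟨D₁', hc₁⟩ ⟨D₂', hc₂⟩ ⟨f⟩ hg₁
    -- every hom D₁ → M lands in D₁, in particular f followed by inclusion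
    have hf : ∀ d : D₁, ((f d : M)) ∈ D₁ := by
      intro d
      have h0 := hg₁ (D₁.mkQ ∘ₗ D₂.subtype ∘ₗ (f : D₁ →ₗ[R] D₂))
      have h1 := LinearMap.congr_fun h0 d
      simpa [Submodule.Quotient.mk_eq_zero] using h1
    have hle₂ : D₂ ≤ D₁ := by
      intro y hy
      have : (⟨y, hy⟩ : D₂) = f (f.symm ⟨y, hy⟩) := (f.apply_symm_apply _).symm
      have h2 := hf (f.symm ⟨y, hy⟩)
      rwa [← this] at h2
    have heq : D₁ = D₂ := le_antisymm (aux_le hDF D₁ D₂ D₁' D₂' hc₁ hc₂ f hf) hle₂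
    subst heq
    exact hg₁
  · intro h a b hab
    set e : Module.End R M := b * a with he
    have hbinj : Function.Injective b := by
      intro x y hxy
      have := congrArg a hxy
      simpa using congrArg (fun z => z) (by
        have h1 : a (b x) = x := LinearMap.congr_fun hab x
        have h2 : a (b y) = y := LinearMap.congr_fun hab y
        rw [← h1, ← h2, this] : x = y)
    have hee : ∀ x, e (e x) = e x := by
      intro x
      show b (a (b (a x))) = b (a x)
      rw [show a (b (a x)) = a x from LinearMap.congr_fun hab (a x)]
    have hrange : LinearMap.range e = LinearMap.range b := by
      apply le_antisymm
      · rintro _ ⟨x, rfl⟩; exact ⟨a x, rfl⟩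
      · rintro _ ⟨x, rfl⟩
        refine ⟨b x, ?_⟩
        show b (a (b x)) = b x
        rw [show a (b x) = x from LinearMap.congr_fun hab x]
    have hcompl : IsCompl (LinearMap.range e) (LinearMap.ker e) := by
      constructor
      · rw [disjoint_iff_inf_le]
        rintro x ⟨⟨y, hy⟩, hx2⟩
        have : e x = 0 := hx2
        have : e x = x := by rw [← hy]; exact hee y
        simp_all
      · rw [codisjoint_iff_le_sup]
        intro x _
        have : x = e x + (x - e x) := by abel
        rw [this]
        refine Submodule.add_mem_sup ⟨x, rfl⟩ ?_
        simp [LinearMap.mem_ker, map_sub, hee]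
    -- iso M ≃ range e
    have iso : M ≃ₗ[R] LinearMap.range e :=
      (LinearEquiv.ofInjective b hbinj).trans (LinearEquiv.ofEq _ _ hrange.symm)
    have htop : ∀ g : (⊤ : Submodule R M) →ₗ[R] (M ⧸ (⊤ : Submodule R M)), g = 0 := by
      haveI : Subsingleton (M ⧸ (⊤ : Submodule R M)) :=
        Submodule.Quotient.subsingleton_iff.mpr rfl
      intro g
      apply LinearMap.ext
      intro x
      exact Subsingleton.elim _ _
    have key := h ⊤ (LinearMap.range e) ⟨⊥, isCompl_top_bot⟩ ⟨LinearMap.ker e, hcompl⟩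
      ⟨Submodule.topEquiv.trans iso⟩ htop
    have hsurj : ∀ x : M, x ∈ LinearMap.range e := by
      intro x
      have h0 := key ((LinearMap.range e).mkQ ∘ₗ (iso.symm : LinearMap.range e →ₗ[R] M))
      have h1 := LinearMap.congr_fun h0 (iso x)
      simp only [LinearMap.comp_apply, LinearEquiv.coe_coe, LinearEquiv.symm_apply_apply,
        LinearMap.zero_apply, Submodule.mkQ_apply] at h1
      exact (Submodule.Quotient.mk_eq_zero _).mp h1
    apply LinearMap.ext
    intro x
    obtain ⟨y, hy⟩ := hsurj x
    show b (a x) = x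
    calc b (a x) = e x := rfl
      _ = e (e y) := by rw [hy]
      _ = e y := hee y
      _ = x := hy
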